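/- arXiv:2006.07839 — 2 statements merged into one kernel-verified Lean document; each statement's English description precedes it below -/
import Mathlib

section
/- Let M be a positive definite symmetric d×d real matrix and w ∈ ℝ^d. Then the function F(u) := sqrt(⟨u, M u⟩ + (max{0, -⟨u, w⟩})²) is convex on ℝ^d. -/
open scoped RealInnerProductSpace
open Matrix

lemma matrix_symm {d : ℕ} {M : Matrix (Fin d) (Fin d) ℝ} (hM : M.PosDef)
    (u v : Fin d → ℝ) : u ⬝ᵥ M *ᵥ v = v ⬝ᵥ M *ᵥ u := by
  have hs : Mᵀ = M := by
    have := hM.isHermitian.eq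
    rw [Matrix.conjTranspose_eq_transpose_of_trivial] at this; exact this
  rw [dotProduct_mulVec, ← mulVec_transpose, hs, dotProduct_comm]

lemma matrix_pos {d : ℕ} {M : Matrix (Fin d) (Fin d) ℝ} (hM : M.PosDef)
    {u : Fin d → ℝ} (hu : u ≠ 0) : 0 < u ⬝ᵥ M *ᵥ u := by
  simpa using hM.dotProduct_mulVec_pos hu

lemma matrix_nonneg {d : ℕ} {M : Matrix (Fin d) (Fin d) ℝ} (hM : M.PosDef)
    (u : Fin d → ℝ) : 0 ≤ u ⬝ᵥ M *ᵥ u := by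
  rcases eq_or_ne u 0 with rfl | hu
  · simp
  · exact (matrix_pos hM hu).le

lemma matrix_cs {d : ℕ} {M : Matrix (Fin d) (Fin d) ℝ} (hM : M.PosDef)
    (u v : Fin d → ℝ) :
    u ⬝ᵥ M *ᵥ v ≤ Real.sqrt (u ⬝ᵥ M *ᵥ u) * Real.sqrt (v ⬝ᵥ M *ᵥ v) := by
  rcases eq_or_ne u 0 with rfl | hu
  · simp
  rcases eq_or_ne v 0 with rfl | hv
  · simp
  set α := Real.sqrt (u ⬝ᵥ M *ᵥ u) with hα
  set β := Real.sqrt (v ⬝ᵥ M *ᵥ v) with hβ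
  have hαpos : 0 < α := Real.sqrt_pos.2 (matrix_pos hM hu)
  have hβpos : 0 < β := Real.sqrt_pos.2 (matrix_pos hM hv)
  have hα2 : α ^ 2 = u ⬝ᵥ M *ᵥ u := Real.sq_sqrt (matrix_nonneg hM u)
  have hβ2 : β ^ 2 = v ⬝ᵥ M *ᵥ v := Real.sq_sqrt (matrix_nonneg hM v)
  have key : 0 ≤ (β • u - α • v) ⬝ᵥ M *ᵥ (β • u - α • v) := matrix_nonneg hM _
  have expand : (β • u - α • v) ⬝ᵥ M *ᵥ (β • u - α • v)
      = β^2 * (u ⬝ᵥ M *ᵥ u) - 2*α*β*(u ⬝ᵥ M *ᵥ v) + α^2 * (v ⬝ᵥ M *ᵥ v) := by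
    simp only [mulVec_sub, mulVec_smul, sub_dotProduct, dotProduct_sub,
      smul_dotProduct, dotProduct_smul, smul_eq_mul]
    rw [matrix_symm hM v u]
    ring
  rw [expand, hα2, hβ2] at key
  nlinarith [mul_pos hαpos hβpos]

lemma sqrt_sq_add_sq_add_le (x₁ y₁ x₂ y₂ : ℝ) :
    Real.sqrt ((x₁+x₂)^2 + (y₁+y₂)^2) ≤ Real.sqrt (x₁^2+y₁^2) + Real.sqrt (x₂^2+y₂^2) := by
  have h := norm_add_le (⟨x₁,y₁⟩ : ℂ) ⟨x₂,y₂⟩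
  simpa [Complex.norm_def, Complex.normSq_apply, Complex.add_re, Complex.add_im, sq] using h

lemma aux_convex (d : ℕ)
    (M : Matrix (Fin d) (Fin d) ℝ) (hM : M.PosDef)
    (w : Fin d → ℝ) :
    ConvexOn ℝ Set.univ (fun u : Fin d → ℝ =>
      Real.sqrt (u ⬝ᵥ M *ᵥ u + (max 0 (-(u ⬝ᵥ w))) ^ 2)) := by
  refine ⟨convex_univ, fun u _ v _ a b ha hb hab => ?_⟩
  set α := Real.sqrt (u ⬝ᵥ M *ᵥ u) with hα
  set β := Real.sqrt (v ⬝ᵥ M *ᵥ v) with hβ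
  set p := max 0 (-(u ⬝ᵥ w)) with hp
  set r := max 0 (-(v ⬝ᵥ w)) with hr
  have hα2 : α ^ 2 = u ⬝ᵥ M *ᵥ u := Real.sq_sqrt (matrix_nonneg hM u)
  have hβ2 : β ^ 2 = v ⬝ᵥ M *ᵥ v := Real.sq_sqrt (matrix_nonneg hM v)
  have hαnn : 0 ≤ α := Real.sqrt_nonneg _
  have hβnn : 0 ≤ β := Real.sqrt_nonneg _
  have hpnn : 0 ≤ p := le_max_left _ _
  have hrnn : 0 ≤ r := le_max_left _ _
  have h1 : (a • u + b • v : Fin d → ℝ) ⬝ᵥ M *ᵥ (a • u + b • v : Fin d → ℝ)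
      ≤ (a*α + b*β)^2 := by
    have hcs := matrix_cs hM u v
    have expand : (a • u + b • v : Fin d → ℝ) ⬝ᵥ M *ᵥ (a • u + b • v : Fin d → ℝ)
        = a^2 * (u ⬝ᵥ M *ᵥ u) + 2*a*b*(u ⬝ᵥ M *ᵥ v) + b^2 * (v ⬝ᵥ M *ᵥ v) := by
      simp only [mulVec_add, mulVec_smul, add_dotProduct, dotProduct_add,
        smul_dotProduct, dotProduct_smul, smul_eq_mul]
      rw [matrix_symm hM v u]
      ring
    rw [expand, ← hα2, ← hβ2]
    nlinarith [mul_nonneg ha hb]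
  have h2 : max 0 (-((a • u + b • v : Fin d → ℝ) ⬝ᵥ w)) ≤ a*p + b*r := by
    have hd : ((a • u + b • v : Fin d → ℝ) ⬝ᵥ w) = a * (u ⬝ᵥ w) + b * (v ⬝ᵥ w) := by
      simp [add_dotProduct, smul_dotProduct]
    rw [hd]
    refine max_le (by positivity) ?_
    have h3 : -(u ⬝ᵥ w) ≤ p := le_max_right _ _
    have h4 : -(v ⬝ᵥ w) ≤ r := le_max_right _ _
    nlinarith
  have h2' : (max 0 (-((a • u + b • v : Fin d → ℝ) ⬝ᵥ w)))^2 ≤ (a*p + b*r)^2 := by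
    have : (0:ℝ) ≤ max 0 (-((a • u + b • v : Fin d → ℝ) ⬝ᵥ w)) := le_max_left _ _
    nlinarith
  calc Real.sqrt ((a • u + b • v : Fin d → ℝ) ⬝ᵥ M *ᵥ (a • u + b • v : Fin d → ℝ)
        + (max 0 (-((a • u + b • v : Fin d → ℝ) ⬝ᵥ w)))^2)
      ≤ Real.sqrt ((a*α + b*β)^2 + (a*p + b*r)^2) := by
        apply Real.sqrt_le_sqrt; linarith
    _ ≤ Real.sqrt ((a*α)^2 + (a*p)^2) + Real.sqrt ((b*β)^2 + (b*r)^2) :=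
        sqrt_sq_add_sq_add_le _ _ _ _
    _ = a * Real.sqrt (α^2 + p^2) + b * Real.sqrt (β^2 + r^2) := by
        rw [show (a*α)^2 + (a*p)^2 = a^2 * (α^2+p^2) by ring,
            show (b*β)^2 + (b*r)^2 = b^2 * (β^2+r^2) by ring,
            Real.sqrt_mul (sq_nonneg a), Real.sqrt_mul (sq_nonneg b),
            Real.sqrt_sq ha, Real.sqrt_sq hb]
    _ = a * Real.sqrt (u ⬝ᵥ M *ᵥ u + p^2) + b * Real.sqrt (v ⬝ᵥ M *ᵥ v + r^2) := by
        rw [hα2, hβ2]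


/-- The asymmetric quadratic metric
`F(u) = sqrt(⟨u, M u⟩ + (max{0, -⟨u, w⟩})²)` is convex on `ℝ^d`
for a symmetric positive definite matrix `M` and vector `w`. -/
theorem asymmetric_quadratic_metric_convex (d : ℕ)
    (M : Matrix (Fin d) (Fin d) ℝ) (hM : M.PosDef)
    (w : EuclideanSpace ℝ (Fin d)) :
    ConvexOn ℝ Set.univ (fun u : EuclideanSpace ℝ (Fin d) =>
      Real.sqrt (⟪u, (WithLp.toLp 2 (M.mulVec u) : EuclideanSpace ℝ (Fin d))⟫
        + (max 0 (-⟪u, w⟫)) ^ 2)) := by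
  have h := (aux_convex d M hM (w : Fin d → ℝ)).comp_linearMap
    (EuclideanSpace.equiv (Fin d) ℝ).toLinearMap
  simp only [Set.preimage_univ] at h
  convert h using 2 with u
  · rfl
  · simp [EuclideanSpace.inner_eq_star_dotProduct, dotProduct_comm]
    rfl
end

section
/- Let M be a positive definite symmetric d×d real matrix and w ∈ ℝ^d. Then F(u) := sqrt(⟨u, M u⟩ + (max{0, -⟨u, w⟩})²) satisfies the triangle inequality: F(u + v) ≤ F(u) + F(v) for all u, v ∈ ℝ^d. -/
open scoped RealInnerProductSpace
open Matrix

private lemma minkowski2 (a b c e : ℝ) (ha : 0 ≤ a) (hb : 0 ≤ b) (hc : 0 ≤ c)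
    (he : 0 ≤ e) :
    Real.sqrt ((a + c) ^ 2 + (b + e) ^ 2)
      ≤ Real.sqrt (a ^ 2 + b ^ 2) + Real.sqrt (c ^ 2 + e ^ 2) := by
  set s1 := Real.sqrt (a ^ 2 + b ^ 2) with hs1
  set s2 := Real.sqrt (c ^ 2 + e ^ 2) with hs2
  have hs1n : 0 ≤ s1 := Real.sqrt_nonneg _
  have hs2n : 0 ≤ s2 := Real.sqrt_nonneg _
  have h1 : s1 ^ 2 = a ^ 2 + b ^ 2 := Real.sq_sqrt (by positivity)
  have h2 : s2 ^ 2 = c ^ 2 + e ^ 2 := Real.sq_sqrt (by positivity)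
  have hcs : a * c + b * e ≤ s1 * s2 := by
    have : (a * c + b * e) ^ 2 ≤ (s1 * s2) ^ 2 := by
      rw [mul_pow, h1, h2]; nlinarith [sq_nonneg (a * e - b * c)]
    calc a * c + b * e ≤ |a * c + b * e| := le_abs_self _
      _ = Real.sqrt ((a * c + b * e) ^ 2) := (Real.sqrt_sq_eq_abs _).symm
      _ ≤ Real.sqrt ((s1 * s2) ^ 2) := Real.sqrt_le_sqrt this
      _ = s1 * s2 := Real.sqrt_sq (mul_nonneg hs1n hs2n)
  have key : (a + c) ^ 2 + (b + e) ^ 2 ≤ (s1 + s2) ^ 2 := by nlinarith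
  calc Real.sqrt ((a + c) ^ 2 + (b + e) ^ 2) ≤ Real.sqrt ((s1 + s2) ^ 2) :=
        Real.sqrt_le_sqrt key
    _ = s1 + s2 := Real.sqrt_sq (by positivity)

/-- The asymmetric quadratic metric satisfies the triangle
inequality `F(u + v) ≤ F(u) + F(v)`. -/
theorem asymmetric_quadratic_metric_triangle (d : ℕ)
    (M : Matrix (Fin d) (Fin d) ℝ) (hM : M.PosDef)
    (w : EuclideanSpace ℝ (Fin d))
    (F : EuclideanSpace ℝ (Fin d) → ℝ)
    (hF : ∀ u, F u = Real.sqrt (⟪u, (WithLp.toLp 2 (M.mulVec u) : EuclideanSpace ℝ (Fin d))⟫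
        + (max 0 (-⟪u, w⟫)) ^ 2)) :
    ∀ u v : EuclideanSpace ℝ (Fin d), F (u + v) ≤ F u + F v := by
  intro u v
  open scoped MatrixOrder in set S := CFC.sqrt M with hSdef
  have hSS : S * S = M := by
    open scoped MatrixOrder in exact CFC.sqrt_mul_sqrt_self M hM.posSemidef.nonneg
  have hSsym : S.transpose = S := by
    have := (show S.PosSemidef by
      open scoped MatrixOrder in exact (CFC.sqrt_nonneg M).posSemidef).isHermitian
    simpa [Matrix.IsHermitian, Matrix.conjTranspose_eq_transpose_of_trivial] using this
  have hvm : ∀ z : Fin d → ℝ, z ᵥ* S = S *ᵥ z := by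
    intro z; rw [← Matrix.vecMul_transpose, hSsym]
  -- embed S *ᵥ x into EuclideanSpace
  set e : (Fin d → ℝ) → EuclideanSpace ℝ (Fin d) := fun z => (WithLp.equiv 2 (Fin d → ℝ)).symm z
    with hedef
  have hkey : ∀ x y : EuclideanSpace ℝ (Fin d),
      ⟪x, (WithLp.toLp 2 (M.mulVec y) : EuclideanSpace ℝ (Fin d))⟫ = ⟪e (S *ᵥ x), e (S *ᵥ y)⟫ := by
    intro x y
    have h1 : ⟪x, (WithLp.toLp 2 (M.mulVec y) : EuclideanSpace ℝ (Fin d))⟫ = x ⬝ᵥ (M *ᵥ y) := by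
      simp [PiLp.inner_apply, dotProduct, RCLike.inner_apply, mul_comm]
    have h2 : x ⬝ᵥ (M *ᵥ y) = (S *ᵥ x) ⬝ᵥ (S *ᵥ y) := by
      rw [← hSS, ← Matrix.mulVec_mulVec, Matrix.dotProduct_mulVec, hvm]
    have h3 : ⟪e (S *ᵥ x), e (S *ᵥ y)⟫ = (S *ᵥ x) ⬝ᵥ (S *ᵥ y) := by
      simp [hedef, PiLp.inner_apply, dotProduct, RCLike.inner_apply, mul_comm]
    rw [h1, h2, h3]
  have hquad : ∀ x : EuclideanSpace ℝ (Fin d),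
      ⟪x, (WithLp.toLp 2 (M.mulVec x) : EuclideanSpace ℝ (Fin d))⟫ = ‖e (S *ᵥ x)‖ ^ 2 := by
    intro x; rw [hkey, real_inner_self_eq_norm_sq]
  have hcross : ∀ x y : EuclideanSpace ℝ (Fin d),
      ⟪x, (WithLp.toLp 2 (M.mulVec y) : EuclideanSpace ℝ (Fin d))⟫ ≤ ‖e (S *ᵥ x)‖ * ‖e (S *ᵥ y)‖ := by
    intro x y; rw [hkey]; exact real_inner_le_norm _ _
  set au := ‖e (S *ᵥ u)‖ with hau
  set av := ‖e (S *ᵥ v)‖ with hav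
  set bu := max 0 (-⟪u, w⟫) with hbu
  set bv := max 0 (-⟪v, w⟫) with hbv
  have hbun : 0 ≤ bu := le_max_left _ _
  have hbvn : 0 ≤ bv := le_max_left _ _
  -- bound on the quadratic part of u+v
  have hMuv : ⟪u + v, (WithLp.toLp 2 (M.mulVec (u + v)) : EuclideanSpace ℝ (Fin d))⟫ ≤ (au + av) ^ 2 := by
    have hadd : (WithLp.toLp 2 (M.mulVec (u + v)) : EuclideanSpace ℝ (Fin d))
        = (WithLp.toLp 2 (M.mulVec u) : EuclideanSpace ℝ (Fin d)) + (WithLp.toLp 2 (M.mulVec v) : EuclideanSpace ℝ (Fin d)) := by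
      ext i
      simp [Matrix.mulVec, dotProduct, PiLp.add_apply, mul_add,
        Finset.sum_add_distrib]
    rw [hadd, inner_add_left, inner_add_right, inner_add_right, hquad u, hquad v]
    have h1 := hcross u v
    have h2 := hcross v u
    nlinarith
  -- bound on the asymmetric part
  have hbuv : max 0 (-⟪u + v, w⟫) ≤ bu + bv := by
    rw [inner_add_left, neg_add]
    exact max_le (by positivity) (add_le_add (le_max_right _ _) (le_max_right _ _))
  have hbuv2 : (max 0 (-⟪u + v, w⟫)) ^ 2 ≤ (bu + bv) ^ 2 := by
    have h0 : (0:ℝ) ≤ max 0 (-⟪u + v, w⟫) := le_max_left _ _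
    nlinarith
  rw [hF, hF, hF, hquad u, hquad v]
  calc Real.sqrt (⟪u + v, (WithLp.toLp 2 (M.mulVec (u + v)) : EuclideanSpace ℝ (Fin d))⟫
          + (max 0 (-⟪u + v, w⟫)) ^ 2)
      ≤ Real.sqrt ((au + av) ^ 2 + (bu + bv) ^ 2) :=
        Real.sqrt_le_sqrt (add_le_add hMuv hbuv2)
    _ ≤ Real.sqrt (au ^ 2 + bu ^ 2) + Real.sqrt (av ^ 2 + bv ^ 2) :=
        minkowski2 _ _ _ _ (norm_nonneg _) hbun (norm_nonneg _) hbvn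
end
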